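/- For a walker initially localized at node j of a graph with Laplacian L, the quantum-classical conditional distance D(t|j) = 1 − ∑_k p_{kj}(t)|α_{kj}(t)|² satisfies D(t|j) = d_j · t + O(t²) as t → 0⁺, where d_j is the degree of node j. -/

import Mathlib

open NormedSpace Matrix Finset
open scoped ComplexOrder

noncomputable def lap {N : ℕ} (G : SimpleGraph (Fin N)) [DecidableRel G.Adj] :
    Matrix (Fin N) (Fin N) ℝ :=
  Matrix.of fun j k => if j = k then -(G.degree j : ℝ) else if G.Adj j k then 1 else 0

/-- classical transition probabilities `p_{kj}(t) = ⟨k|e^{tL}|j⟩` -/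
noncomputable def cp {N : ℕ} (G : SimpleGraph (Fin N)) [DecidableRel G.Adj] (t : ℝ) :
    Matrix (Fin N) (Fin N) ℝ :=
  exp (t • lap G)

/-- quantum amplitudes `α_{kj}(t) = ⟨k|e^{itL}|j⟩` -/
noncomputable def qa {N : ℕ} (G : SimpleGraph (Fin N)) [DecidableRel G.Adj] (t : ℝ) :
    Matrix (Fin N) (Fin N) ℂ :=
  exp ((t * Complex.I) • (lap G).map ((↑) : ℝ → ℂ))

/-- Taylor-type bound: a real-analytic function vanishing to second order at `0` is `O(t²)`. -/
lemma isBigO_sq_of_analytic {f : ℝ → ℝ} (hf : AnalyticAt ℝ f 0) (h0 : f 0 = 0)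
    (h1 : deriv f 0 = 0) : f =O[nhds 0] fun t : ℝ => t ^ 2 := by
  obtain ⟨p, hp⟩ := hf
  have H := hp.isBigO_sub_partialSum_pow 2
  have hc0 : p.coeff 0 = 0 := (hp.coeff_zero fun _ => 1).trans h0
  have hc1 : p.coeff 1 = 0 := by
    have h := hp.deriv
    rw [h1] at h
    exact h.symm
  have hps : ∀ y : ℝ, p.partialSum 2 y = 0 := by
    intro y
    simp [FormalMultilinearSeries.partialSum, Finset.sum_range_succ,
      FormalMultilinearSeries.apply_eq_pow_smul_coeff, hc0, hc1]
  have H2 : f =O[nhds 0] fun y : ℝ => ‖y‖ ^ 2 := by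
    simpa [hps] using H
  exact H2.congr' Filter.EventuallyEq.rfl
    (Filter.Eventually.of_forall fun y => by simp [sq_abs])

section

attribute [local instance] Matrix.linftyOpNormedRing Matrix.linftyOpNormedAlgebra

/-- entry evaluation as a continuous `ℝ`-linear map (real matrices). -/
noncomputable def entR {N : ℕ} (k j : Fin N) : Matrix (Fin N) (Fin N) ℝ →L[ℝ] ℝ :=
  LinearMap.toContinuousLinearMap
    { toFun := fun A => A k j
      map_add' := fun _ _ => rfl
      map_smul' := fun _ _ => rfl }

@[simp] lemma entR_apply {N : ℕ} (k j : Fin N) (A : Matrix (Fin N) (Fin N) ℝ) :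
    entR k j A = A k j := rfl

/-- entry evaluation as a continuous `ℝ`-linear map (complex matrices). -/
noncomputable def entC {N : ℕ} (k j : Fin N) : Matrix (Fin N) (Fin N) ℂ →L[ℝ] ℂ :=
  LinearMap.toContinuousLinearMap
    { toFun := fun A => A k j
      map_add' := fun _ _ => rfl
      map_smul' := fun _ _ => rfl }

@[simp] lemma entC_apply {N : ℕ} (k j : Fin N) (A : Matrix (Fin N) (Fin N) ℂ) :
    entC k j A = A k j := rfl

/-- The conditional QC-distance `D(t|j) = 1 - ∑_k p_{kj}(t)|α_{kj}(t)|²` satisfies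
`D(t|j) = d_j · t + O(t²)` as `t → 0⁺`, with `d_j` the degree of node `j`. -/
theorem qc_distance_short_time {N : ℕ} (G : SimpleGraph (Fin N)) [DecidableRel G.Adj]
    (j : Fin N) :
    (fun t : ℝ =>
        (1 - ∑ k, cp G t k j * ‖qa G t k j‖ ^ 2) - (G.degree j : ℝ) * t)
      =O[nhdsWithin 0 (Set.Ioi 0)] (fun t : ℝ => t ^ 2) := by
  set L : Matrix (Fin N) (Fin N) ℝ := lap G with hL
  set M : Matrix (Fin N) (Fin N) ℂ := L.map ((↑) : ℝ → ℂ) with hM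
  set d : ℝ := (G.degree j : ℝ) with hd
  -- rewrite `qa` in `exp (t • x)` form
  have hqa : ∀ t : ℝ, qa G t = exp (t • (Complex.I • M)) := by
    intro t
    unfold qa
    congr 1
    rw [← smul_assoc, Complex.real_smul]
  -- values at `t = 0`
  have hP0 : ∀ k : Fin N, cp G 0 k j = if k = j then 1 else 0 := by
    intro k
    unfold cp
    rw [zero_smul, exp_zero]
    exact Matrix.one_apply
  have hQ0 : ∀ k : Fin N, qa G 0 k j = if k = j then 1 else 0 := by
    intro k
    rw [hqa 0, zero_smul, exp_zero]
    exact Matrix.one_apply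
  -- analyticity of entries
  have hPan : ∀ k : Fin N, AnalyticAt ℝ (fun t : ℝ => cp G t k j) 0 := by
    intro k
    have hlin : AnalyticAt ℝ (fun t : ℝ => t • L) 0 :=
      ((1 : ℝ →L[ℝ] ℝ).smulRight L).analyticAt 0
    have hexp : AnalyticAt ℝ exp ((0 : ℝ) • L) := exp_analytic (𝕂 := ℝ) _
    have h1 : AnalyticAt ℝ (fun t : ℝ => exp (t • L)) 0 :=
      AnalyticAt.comp (f := fun t : ℝ => t • L) hexp hlin
    have h2 : AnalyticAt ℝ (fun t : ℝ => entR k j (exp (t • L))) 0 :=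
      AnalyticAt.comp (f := fun t : ℝ => exp (t • L)) ((entR k j).analyticAt _) h1
    exact h2
  have hQan : ∀ k : Fin N, AnalyticAt ℝ (fun t : ℝ => qa G t k j) 0 := by
    intro k
    have hlin : AnalyticAt ℝ (fun t : ℝ => t • (Complex.I • M)) 0 :=
      ((1 : ℝ →L[ℝ] ℝ).smulRight (Complex.I • M)).analyticAt 0
    have hexp : AnalyticAt ℝ exp ((0 : ℝ) • (Complex.I • M)) :=
      (exp_analytic (𝕂 := ℂ) _).restrictScalars
    have h1 : AnalyticAt ℝ (fun t : ℝ => exp (t • (Complex.I • M))) 0 :=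
      AnalyticAt.comp (f := fun t : ℝ => t • (Complex.I • M)) hexp hlin
    have h2 : AnalyticAt ℝ (fun t : ℝ => entC k j (exp (t • (Complex.I • M)))) 0 :=
      AnalyticAt.comp (f := fun t : ℝ => exp (t • (Complex.I • M))) ((entC k j).analyticAt _) h1
    have h3 : AnalyticAt ℝ (fun t : ℝ => exp (t • (Complex.I • M)) k j) 0 := h2
    simpa only [← hqa] using h3
  -- derivatives of entries at `0`
  have hPd : ∀ k : Fin N, HasDerivAt (fun t : ℝ => cp G t k j) (L k j) 0 := by
    intro k
    have h := hasDerivAt_exp_smul_const (𝕂 := ℝ) L (0 : ℝ)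
    rw [zero_smul, exp_zero, one_mul] at h
    have h2 := (entR k j).hasFDerivAt.comp_hasDerivAt 0 h
    exact h2
  have hQd : ∀ k : Fin N,
      HasDerivAt (fun t : ℝ => qa G t k j) (Complex.I * (L k j : ℂ)) 0 := by
    intro k
    have h := hasDerivAt_exp_smul_const (𝕂 := ℝ) (Complex.I • M) (0 : ℝ)
    rw [zero_smul, exp_zero, one_mul] at h
    have h2 := (entC k j).hasFDerivAt.comp_hasDerivAt 0 h
    have h3 : HasDerivAt (fun t : ℝ => exp (t • (Complex.I • M)) k j)
        (Complex.I * (L k j : ℂ)) 0 := by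
      exact h2
    simpa only [← hqa] using h3
  -- the real function in question, in `re`/`im` form
  set F : ℝ → ℝ := fun t =>
    (1 - ∑ k, cp G t k j * ((qa G t k j).re ^ 2 + (qa G t k j).im ^ 2)) - d * t with hF
  have hQre : ∀ k : Fin N, HasDerivAt (fun t : ℝ => (qa G t k j).re) 0 0 := by
    intro k
    have h := Complex.reCLM.hasFDerivAt.comp_hasDerivAt 0 (hQd k)
    simpa [Function.comp_def] using h
  have hQim : ∀ k : Fin N, HasDerivAt (fun t : ℝ => (qa G t k j).im) (L k j) 0 := by
    intro k
    have h := Complex.imCLM.hasFDerivAt.comp_hasDerivAt 0 (hQd k)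
    simpa [Function.comp_def] using h
  -- analyticity of F
  have hFan : AnalyticAt ℝ F 0 := by
    rw [hF]
    apply AnalyticAt.sub
    · apply AnalyticAt.sub
      · exact analyticAt_const
      · apply Finset.analyticAt_fun_sum
        intro k _
        apply (hPan k).mul
        apply AnalyticAt.add
        · exact ((Complex.reCLM.analyticAt _).comp (hQan k)).pow 2
        · exact ((Complex.imCLM.analyticAt _).comp (hQan k)).pow 2
    · exact analyticAt_const.mul analyticAt_id
  -- value of F at 0
  have hsum0 : ∑ k, cp G 0 k j * ((qa G 0 k j).re ^ 2 + (qa G 0 k j).im ^ 2) = 1 := by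
    rw [Finset.sum_eq_single j]
    · simp [hP0, hQ0]
    · intro k _ hk
      simp [hP0, hQ0, hk]
    · intro h
      exact absurd (Finset.mem_univ j) h
  have hF0 : F 0 = 0 := by
    rw [hF]
    simp [hsum0]
  -- derivative of F at 0
  have hLjj : L j j = -d := by
    rw [hL, hd, lap]
    simp
  have hSd : HasDerivAt
      (fun t : ℝ => ∑ k, cp G t k j * ((qa G t k j).re ^ 2 + (qa G t k j).im ^ 2)) (-d) 0 := by
    have h := HasDerivAt.fun_sum (fun k (_ : k ∈ Finset.univ) =>
      (hPd k).fun_mul (((hQre k).fun_pow 2).fun_add ((hQim k).fun_pow 2)))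
    refine h.congr_deriv ?_
    rw [Finset.sum_eq_single j]
    · simp [hP0, hQ0, hLjj]
    · intro k _ hk
      simp [hP0, hQ0, hk]
    · intro h
      exact absurd (Finset.mem_univ j) h
  have hFd : HasDerivAt F 0 0 := by
    rw [hF]
    have h1 : HasDerivAt (fun t : ℝ =>
        1 - ∑ k, cp G t k j * ((qa G t k j).re ^ 2 + (qa G t k j).im ^ 2)) (0 - -d) 0 :=
      (hasDerivAt_const 0 (1 : ℝ)).sub hSd
    have h2 : HasDerivAt (fun t : ℝ => d * t) d 0 := by
      simpa using (hasDerivAt_id (0 : ℝ)).const_mul d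
    simpa using h1.fun_sub h2
  have hO := isBigO_sq_of_analytic hFan hF0 hFd.deriv
  have heq : (fun t : ℝ =>
      (1 - ∑ k, cp G t k j * ‖qa G t k j‖ ^ 2) - d * t) = F := by
    funext t
    rw [hF]
    congr 1
    congr 1
    apply Finset.sum_congr rfl
    intro k _
    rw [Complex.sq_norm, Complex.normSq_apply, sq, sq]
  rw [heq]
  exact hO.mono nhdsWithin_le_nhds

end
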